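/- Let R be a commutative ring and let A be an Artinian R-algebra with Jacobson radical J = J(A). If elements b_1, …, b_k of A/J² generate A/J² as an R-algebra, then any elements a_1, …, a_k of A mapping to b_1, …, b_k under the quotient map A → A/J² generate A as an R-algebra. In particular, if A has finitely many elements, then every k-tuple generating A/J² as an R-algebra has exactly |J²|^k lifts to k-tuples of elements of A, and all of these lifts generate A as an R-algebra. -/

import Mathlib

section Aux
variable {R A : Type*} [CommRing R] [Ring A] [Algebra R A]

/-- powers of a left-stable submodule are left-stable -/
lemma aux_pow_stable (J : Submodule R A) (hJ : ∀ (a : A), ∀ x ∈ J, a * x ∈ J) (n : ℕ) :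
    ∀ (a : A), ∀ x ∈ (J ^ (n + 1) : Submodule R A), a * x ∈ J ^ (n + 1) := by
  intro a x hx
  rw [pow_succ'] at hx ⊢
  refine Submodule.mul_induction_on hx (fun p hp q hq => ?_) (fun u v hu hv => ?_)
  · rw [← mul_assoc]; exact Submodule.mul_mem_mul (hJ a p hp) hq
  · rw [mul_add]; exact add_mem hu hv

lemma aux_pow_succ_le (J : Submodule R A) (hJ : ∀ (a : A), ∀ x ∈ J, a * x ∈ J) (n : ℕ) :
    (J ^ (n + 2) : Submodule R A) ≤ J ^ (n + 1) := by
  rw [show n + 2 = 1 + (n + 1) by ring, pow_add, pow_one]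
  exact Submodule.mul_le.2 fun p hp q hq => aux_pow_stable J hJ n p q hq

lemma aux_pow_anti (J : Submodule R A) (hJ : ∀ (a : A), ∀ x ∈ J, a * x ∈ J) {m n : ℕ}
    (h : m ≤ n) : (J ^ (n + 1) : Submodule R A) ≤ J ^ (m + 1) := by
  induction n with
  | zero => simpa [Nat.le_zero.1 h] using le_rfl
  | succ n ih =>
    rcases Nat.le_succ_iff.1 h with h' | h'
    · exact (aux_pow_succ_le J hJ n).trans (ih h')
    · simp [h']

lemma aux_pow_le_pow {M N : Submodule R A} (h : M ≤ N) (m : ℕ) : M ^ m ≤ N ^ m := by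
  induction m with
  | zero => simp
  | succ m ih => rw [pow_succ, pow_succ]; exact mul_le_mul' ih h

end Aux

/-- The Jacobson radical of an Artinian ring is nilpotent (noncommutative version,
stated at the level of `R`-submodules). -/
lemma aux_jac_nilpotent (R A : Type*) [CommRing R] [Ring A] [Algebra R A] [IsArtinianRing A] :
    ∃ n : ℕ, ((Ideal.jacobson (⊥ : Ideal A)).restrictScalars R) ^ (n + 1) = ⊥ := by
  set J : Submodule R A := (Ideal.jacobson (⊥ : Ideal A)).restrictScalars R with hJdef
  have hJ : ∀ (a : A), ∀ x ∈ J, a * x ∈ J := by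
    intro a x hx
    have : a • x ∈ Ideal.jacobson (⊥ : Ideal A) := Submodule.smul_mem _ a hx
    simpa [smul_eq_mul, hJdef] using this
  -- ideals with carrier `J ^ (n+1)`
  let In : ℕ → Ideal A := fun n =>
    { carrier := (J ^ (n + 1) : Submodule R A)
      add_mem' := fun hx hy => add_mem hx hy
      zero_mem' := zero_mem _
      smul_mem' := fun a x hx => by
        simpa [smul_eq_mul] using aux_pow_stable J hJ n a x hx }
  have hInmem : ∀ n x, x ∈ In n ↔ x ∈ (J ^ (n + 1) : Submodule R A) := fun n x => Iff.rfl
  have hmono : ∀ {m n : ℕ}, m ≤ n → In n ≤ In m := by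
    intro m n h x hx
    exact (hInmem m x).2 (aux_pow_anti J hJ h ((hInmem n x).1 hx))
  let f : ℕ →o (Ideal A)ᵒᵈ := ⟨fun n => In n, fun m n h => hmono h⟩
  obtain ⟨n, hn⟩ := IsArtinian.monotone_stabilizes f
  refine ⟨n, ?_⟩
  have hstab : (J ^ (n + 1) : Submodule R A) = J ^ (n + 1) * J ^ (n + 1) := by
    have := hn (2 * n + 1) (by omega)
    have h2 : In n = In (2 * n + 1) := this
    have : (J ^ (n + 1) : Submodule R A) = J ^ (2 * n + 1 + 1) := by
      ext x
      constructor
      · intro hx; exact (hInmem _ x).1 (h2 ▸ (hInmem n x).2 hx)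
      · intro hx; exact (hInmem n x).1 (h2 ▸ (hInmem _ x).2 hx)
    calc (J ^ (n + 1) : Submodule R A) = J ^ (2 * n + 1 + 1) := this
      _ = J ^ (n + 1) * J ^ (n + 1) := by
          rw [show 2 * n + 1 + 1 = (n + 1) + (n + 1) by ring, pow_add]
  set I : Submodule R A := J ^ (n + 1) with hIdef
  by_contra hbot
  obtain ⟨z, hz, hz0⟩ := Submodule.exists_mem_ne_zero_of_ne_bot hbot
  -- the set of left ideals K with I * K ≠ 0 (elementwise)
  set 𝒮 : Set (Ideal A) := {K : Ideal A | ∃ j ∈ I, ∃ y ∈ K, j * y ≠ 0} with h𝒮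
  have htop : (⊤ : Ideal A) ∈ 𝒮 := by
    have hz' : z ∈ I * I := hstab ▸ hz
    refine Submodule.mul_induction_on hz'
      (fun p hp q hq => fun h => ⟨p, hp, q, trivial, by
        intro h0; exact h (by rw [h0])⟩)
      (fun u v hu hv => fun h => ?_) hz0
    rcases eq_or_ne u 0 with h0 | h0
    · exact hv (by simpa [h0] using h)
    · exact hu h0
  obtain ⟨K, hK𝒮, hKmin⟩ := IsArtinian.set_has_minimal 𝒮 ⟨⊤, htop⟩
  obtain ⟨j₀, hj₀, x, hx, hj₀x⟩ := hK𝒮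
  set K' : Ideal A := Submodule.map (LinearMap.toSpanSingleton A A x) (In n) with hK'def
  have hK'K : K' ≤ K := by
    rintro _ ⟨j, hj, rfl⟩
    exact K.smul_mem j hx
  have hK'𝒮 : K' ∈ 𝒮 := by
    have hj₀' : j₀ ∈ I * I := hstab ▸ hj₀
    refine Submodule.mul_induction_on hj₀'
      (fun p hp q hq => fun h => ⟨p, hp, q * x, ⟨q, (hInmem n q).2 hq, by
        simp [LinearMap.toSpanSingleton_apply, smul_eq_mul]⟩, by rwa [mul_assoc] at h⟩)
      (fun u v hu hv => fun h => ?_) hj₀x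
    rw [add_mul] at h
    rcases eq_or_ne (u * x) 0 with h0 | h0
    · exact hv (by simpa [h0] using h)
    · exact hu h0
  have hK'eq : K' = K := hK'K.lt_or_eq.resolve_left (hKmin K' hK'𝒮)
  have hxK' : x ∈ K' := hK'eq ▸ hx
  obtain ⟨j, hj, hjx⟩ := hxK'
  have hjx' : j * x = x := by
    simpa [LinearMap.toSpanSingleton_apply, smul_eq_mul] using hjx
  have hjJ : j ∈ Ideal.jacobson (⊥ : Ideal A) := by
    have : j ∈ J := by
      have : j ∈ (J ^ (n + 1) : Submodule R A) := (hInmem n j).1 hj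
      have := aux_pow_anti J hJ (Nat.zero_le n) this
      simpa using this
    exact this
  have hsub : (1 - j) - 1 ∈ Ideal.jacobson (⊥ : Ideal A) := by
    have : (1 : A) - j - 1 = -j := by abel
    rw [this]; exact neg_mem hjJ
  obtain ⟨s, hs⟩ := Ideal.exists_mul_sub_mem_of_sub_one_mem_jacobson (1 - j) hsub
  rw [Ideal.mem_bot, sub_eq_zero] at hs
  have hx0 : x = 0 := by
    have h1 : (1 - j) * x = 0 := by rw [sub_mul, one_mul, hjx', sub_self]
    calc x = 1 * x := (one_mul x).symm
      _ = (s * (1 - j)) * x := by rw [hs]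
      _ = s * ((1 - j) * x) := by rw [mul_assoc]
      _ = 0 := by rw [h1, mul_zero]
  exact hj₀x (by rw [hx0, mul_zero])


set_option maxHeartbeats 1600000 in
/-- Let `R` be a commutative ring and `A` an Artinian `R`-algebra with
Jacobson radical `J = J(A)`.  The quotient `A/J²` is presented as a surjective
`R`-algebra map `π : A → Q` whose kernel is `J²`.  If `b₁, …, b_k` generate `Q = A/J²`
as an `R`-algebra, then any lifts `a₁, …, a_k` of the `bᵢ` generate `A` as an
`R`-algebra.  In particular, if `A` is finite then every generating `k`-tuple of `A/J²`
has exactly `|J²|^k` lifts to `k`-tuples of `A` generating `A` as an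
`R`-algebra (i.e. `g_k(A, A/J²) = |J²|^k`). -/
theorem stmt_4 (R : Type*) [CommRing R] (A : Type*) [Ring A] [Algebra R A]
    [IsArtinianRing A]
    (Q : Type*) [Ring Q] [Algebra R Q]
    (π : A →ₐ[R] Q) (hπ : Function.Surjective π)
    (hker : (RingHom.ker (π : A →+* Q)).restrictScalars R
      = (Ideal.jacobson (⊥ : Ideal A)).restrictScalars R ^ 2)
    (k : ℕ) (hk : 0 < k) :
    (∀ b : Fin k → Q, Algebra.adjoin R (Set.range b) = ⊤ →
      ∀ a : Fin k → A, (∀ i, π (a i) = b i) → Algebra.adjoin R (Set.range a) = ⊤)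
    ∧ (Finite A → ∀ b : Fin k → Q, Algebra.adjoin R (Set.range b) = ⊤ →
        Nat.card {a : Fin k → A //
          (∀ i, π (a i) = b i) ∧ Algebra.adjoin R (Set.range a) = ⊤}
          = Nat.card ((Ideal.jacobson (⊥ : Ideal A)).restrictScalars R ^ 2 : Submodule R A) ^ k) := by
  set J : Submodule R A := (Ideal.jacobson (⊥ : Ideal A)).restrictScalars R with hJdef
  have hJ : ∀ (a : A), ∀ x ∈ J, a * x ∈ J := by
    intro a x hx
    have : a • x ∈ Ideal.jacobson (⊥ : Ideal A) := Submodule.smul_mem _ a hx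
    simpa [smul_eq_mul, hJdef] using this
  have hJ2le : (J ^ 2 : Submodule R A) ≤ J := by
    rw [pow_two]
    exact Submodule.mul_le.2 fun p hp q hq => hJ p q hq
  have part1 : ∀ b : Fin k → Q, Algebra.adjoin R (Set.range b) = ⊤ →
      ∀ a : Fin k → A, (∀ i, π (a i) = b i) → Algebra.adjoin R (Set.range a) = ⊤ := by
    intro b hb a ha
    set S : Subalgebra R A := Algebra.adjoin R (Set.range a) with hSdef
    set S' : Submodule R A := Subalgebra.toSubmodule S with hS'def
    have hS'mul : S' * S' ≤ S' :=
      Submodule.mul_le.2 fun p hp q hq => S.mul_mem hp hq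
    have hmap : S.map π = ⊤ := by
      rw [hSdef, AlgHom.map_adjoin, ← Set.range_comp,
        show ⇑π ∘ a = b from funext ha, hb]
    have hsup : S' ⊔ (J ^ 2 : Submodule R A) = ⊤ := by
      rw [eq_top_iff]
      intro x _
      have hx : π x ∈ S.map π := by rw [hmap]; trivial
      obtain ⟨s, hs, hsx⟩ := hx
      have hxs : x - s ∈ (J ^ 2 : Submodule R A) := by
        have h1 : x - s ∈ RingHom.ker (π : A →+* Q) := by
          simp [RingHom.mem_ker, map_sub, hsx]
        have h2 : x - s ∈ (RingHom.ker (π : A →+* Q)).restrictScalars R := h1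
        rw [hker] at h2
        exact h2
      have : x = s + (x - s) := by abel
      rw [this]
      exact Submodule.add_mem_sup hs hxs
    set T : Submodule R A := J ⊓ S' with hTdef
    have hJT : J ≤ T ⊔ (J ^ 2 : Submodule R A) := by
      intro x hx
      have : x ∈ S' ⊔ (J ^ 2 : Submodule R A) := by rw [hsup]; trivial
      obtain ⟨s, hs, u, hu, rfl⟩ := Submodule.mem_sup.1 this
      have hsJ : s ∈ J := by
        have : s = (s + u) - u := by abel
        rw [this]
        exact sub_mem hx (hJ2le hu)
      exact Submodule.add_mem_sup (Submodule.mem_inf.2 ⟨hsJ, hs⟩) hu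
    have hTS : ∀ m : ℕ, (T ^ (m + 1) : Submodule R A) ≤ S' := by
      intro m
      induction m with
      | zero => rw [pow_one]; exact inf_le_right
      | succ m ih =>
        rw [pow_succ]
        exact (mul_le_mul' ih inf_le_right).trans hS'mul
    have hstep : ∀ m : ℕ, (J ^ (m + 1) : Submodule R A) ≤ T ^ (m + 1) ⊔ J ^ (m + 2) := by
      intro m
      induction m with
      | zero => simpa using hJT
      | succ m ih =>
        have hm2 : m + 2 = (m + 1) + 1 := by omega
        have hm3 : m + 3 = (m + 2) + 1 := by omega
        have h1 : (J ^ (m + 2) : Submodule R A) = J * J ^ (m + 1) := by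
          rw [hm2, pow_succ']
        have h2 : (J * J ^ (m + 1) : Submodule R A) ≤
            (T ⊔ J ^ 2) * (T ^ (m + 1) ⊔ J ^ (m + 2)) :=
          mul_le_mul' hJT ih
        have hTle : (T : Submodule R A) ≤ J := inf_le_left
        have e1 : (T * T ^ (m + 1) : Submodule R A) = T ^ (m + 2) := by
          conv_rhs => rw [hm2, pow_succ']
        have e2 : (T * J ^ (m + 2) : Submodule R A) ≤ J ^ (m + 3) := by
          conv_rhs => rw [hm3, pow_succ']
          exact mul_le_mul' hTle le_rfl
        have e3 : ((J ^ 2) * T ^ (m + 1) : Submodule R A) ≤ J ^ (m + 3) := by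
          calc ((J ^ 2) * T ^ (m + 1) : Submodule R A) ≤ J ^ 2 * J ^ (m + 1) :=
                mul_le_mul' le_rfl (aux_pow_le_pow hTle (m + 1))
            _ = J ^ (m + 3) := by rw [← pow_add, show 2 + (m + 1) = m + 3 from by omega]
        have e4 : ((J ^ 2) * J ^ (m + 2) : Submodule R A) ≤ J ^ (m + 3) := by
          have : ((J ^ 2) * J ^ (m + 2) : Submodule R A) = J ^ (m + 4) := by
            rw [← pow_add, show 2 + (m + 2) = m + 4 from by omega]
          rw [this]
          exact aux_pow_succ_le J hJ (m + 2)
        rw [h1]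
        refine h2.trans ?_
        rw [Submodule.sup_mul, Submodule.mul_sup, Submodule.mul_sup]
        refine sup_le (sup_le ?_ ?_) (sup_le ?_ ?_)
        · rw [e1]; exact le_sup_left
        · exact e2.trans le_sup_right
        · exact e3.trans le_sup_right
        · exact e4.trans le_sup_right
    have htop : ∀ m : ℕ, S' ⊔ (J ^ (m + 2) : Submodule R A) = ⊤ := by
      intro m
      induction m with
      | zero => simpa using hsup
      | succ m ih =>
        rw [eq_top_iff, ← ih]
        refine sup_le le_sup_left ?_
        refine (hstep (m + 1)).trans (sup_le ((hTS (m + 1)).trans le_sup_left) le_sup_right)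
    obtain ⟨n, hn⟩ := aux_jac_nilpotent R A
    have hnil : (J ^ (n + 3) : Submodule R A) = ⊥ := by
      rw [← le_bot_iff, ← hn]
      exact aux_pow_anti J hJ (by omega : n ≤ n + 2)
    have : S' = ⊤ := by
      have := htop (n + 1)
      rwa [hnil, sup_bot_eq] at this
    exact Algebra.toSubmodule_eq_top.1 this
  refine ⟨part1, ?_⟩
  intro hfin b hb
  have : Finite Q := Finite.of_surjective π hπ
  obtain ⟨c, hc⟩ := Classical.axiomOfChoice (fun i => hπ (b i))
  have e1 : {a : Fin k → A // (∀ i, π (a i) = b i) ∧ Algebra.adjoin R (Set.range a) = ⊤}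
      ≃ {a : Fin k → A // ∀ i, π (a i) = b i} :=
    Equiv.subtypeEquivRight fun a => ⟨fun h => h.1, fun h => ⟨h, part1 b hb a h⟩⟩
  have e2 : {a : Fin k → A // ∀ i, π (a i) = b i} ≃ ∀ i : Fin k, {x : A // π x = b i} :=
    Equiv.subtypePiEquivPi (p := fun i (x : A) => π x = b i)
  have e3 : ∀ i : Fin k, {x : A // π x = b i} ≃
      ((Ideal.jacobson (⊥ : Ideal A)).restrictScalars R ^ 2 : Submodule R A) := by
    intro i
    refine ⟨fun x => ⟨x.1 - c i, ?_⟩, fun y => ⟨y.1 + c i, ?_⟩, fun x => by simp, fun y => by simp⟩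
    · have h1 : x.1 - c i ∈ RingHom.ker (π : A →+* Q) := by
        simp [RingHom.mem_ker, map_sub, x.2, hc i]
      have h2 : x.1 - c i ∈ (RingHom.ker (π : A →+* Q)).restrictScalars R := h1
      rw [hker] at h2
      exact h2
    · have h2 : y.1 ∈ (RingHom.ker (π : A →+* Q)).restrictScalars R := by
        rw [hker]; exact y.2
      have h1 : π y.1 = 0 := h2
      simp [map_add, h1, hc i]
  calc Nat.card {a : Fin k → A //
        (∀ i, π (a i) = b i) ∧ Algebra.adjoin R (Set.range a) = ⊤}
      = Nat.card (∀ i : Fin k,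
          ((Ideal.jacobson (⊥ : Ideal A)).restrictScalars R ^ 2 : Submodule R A)) :=
        Nat.card_congr (e1.trans (e2.trans (Equiv.piCongrRight e3)))
    _ = Nat.card ((Ideal.jacobson (⊥ : Ideal A)).restrictScalars R ^ 2 : Submodule R A) ^ k := by
        rw [Nat.card_pi, Finset.prod_const, Finset.card_univ, Fintype.card_fin]
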